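/- Let f ∈ A = ℝ[x¹,…,xⁿ] be such that all second partial derivatives are constant: ∂_i ∂_j f = a_ij·1 with real numbers a_ij = a_ji (e.g. f a polynomial of degree at most 2). Set L_ij := (∂_i f)·∂_j − (∂_j f)·∂_i. Then for all indices i, j, h, k one has ⁅L_ij, L_hk⁆ = a_jh·L_ik − a_ih·L_jk − a_jk·L_ih + a_ik·L_jh (with real scalar coefficients); consequently the ℝ-linear span of the L_ij is a Lie subalgebra of the derivations of A, of dimension at most n(n−1)/2. -/

import Mathlib

open MvPolynomial

/-- The tangent derivations `L_ij := f_i·∂_j − f_j·∂_i` of a level set of `f`. -/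
noncomputable def Lder {n : ℕ} (f : MvPolynomial (Fin n) ℝ) (i j : Fin n) :
    Derivation ℝ (MvPolynomial (Fin n) ℝ) (MvPolynomial (Fin n) ℝ) :=
  (pderiv i f) • (pderiv j) - (pderiv j f) • (pderiv i)

lemma Lder_self {n : ℕ} (f : MvPolynomial (Fin n) ℝ) (i : Fin n) : Lder f i i = 0 := by
  simp [Lder]

lemma Lder_swap {n : ℕ} (f : MvPolynomial (Fin n) ℝ) (i j : Fin n) :
    Lder f i j = - Lder f j i := by
  simp [Lder]

lemma Lder_bracket {n : ℕ} (f : MvPolynomial (Fin n) ℝ) (a : Fin n → Fin n → ℝ)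
    (hconst : ∀ i j, pderiv i (pderiv j f) = C (a i j))
    (hsymm : ∀ i j, a i j = a j i) (i j h k : Fin n) :
      ⁅Lder f i j, Lder f h k⁆ =
        a j h • Lder f i k - a i h • Lder f j k
          - a j k • Lder f i h + a i k • Lder f j h := by
  apply derivation_ext
  intro m
  simp only [Lder, Derivation.commutator_apply, Derivation.sub_apply, Derivation.smul_apply,
    Derivation.coe_smul, Pi.smul_apply, smul_eq_mul, Derivation.add_apply, map_sub, map_mul,
    Derivation.mk_coe, pderiv_X, Pi.single_apply, hconst, smul_sub]
  simp only [apply_ite (pderiv i), apply_ite (pderiv j), apply_ite (pderiv h), apply_ite (pderiv k),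
    map_one, map_zero, mul_ite, mul_one, mul_zero, hconst]
  rw [hsymm k i, hsymm k j, hsymm h i, hsymm h j]
  simp only [smul_eq_C_mul]
  split_ifs <;> ring


section BracketLemmas
variable {n : ℕ}
abbrev Der (n : ℕ) := Derivation ℝ (MvPolynomial (Fin n) ℝ) (MvPolynomial (Fin n) ℝ)

lemma Dzero_lie (y : Der n) : ⁅(0 : Der n), y⁆ = 0 := by
  ext m; simp [Derivation.commutator_apply]

lemma Dlie_zero (x : Der n) : ⁅x, (0 : Der n)⁆ = 0 := by
  ext m; simp [Derivation.commutator_apply]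

lemma Dadd_lie (x y z : Der n) : ⁅x + y, z⁆ = ⁅x, z⁆ + ⁅y, z⁆ := by
  ext m; simp [Derivation.commutator_apply]; ring

lemma Dlie_add (x y z : Der n) : ⁅x, y + z⁆ = ⁅x, y⁆ + ⁅x, z⁆ := by
  ext m; simp [Derivation.commutator_apply]; ring

lemma Dsmul_lie (r : ℝ) (x y : Der n) : ⁅r • x, y⁆ = r • ⁅x, y⁆ := by
  ext m; simp [Derivation.commutator_apply, smul_sub]

lemma Dlie_smul (r : ℝ) (x y : Der n) : ⁅x, r • y⁆ = r • ⁅x, y⁆ := by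
  ext m; simp [Derivation.commutator_apply, smul_sub]
end BracketLemmas

lemma card_filter_lt_le (n : ℕ) :
    (Finset.univ.filter (fun p : Fin n × Fin n => p.1 < p.2)).card ≤ n * (n - 1) / 2 := by
  rw [← Nat.choose_two_right]
  have := Finset.card_le_card_of_injOn (f := fun p : Fin n × Fin n => ({p.1, p.2} : Finset (Fin n)))
    (s := Finset.univ.filter (fun p : Fin n × Fin n => p.1 < p.2))
    (t := Finset.univ.powersetCard 2) ?_ ?_
  · simpa [Finset.card_powersetCard] using this
  · intro p hp
    simp only [Finset.mem_coe, Finset.mem_filter] at hp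
    simp [Finset.mem_powersetCard, Finset.card_pair hp.2.ne]
  · intro p hp q hq hpq
    simp only [Finset.coe_filter, Set.mem_setOf_eq] at hp hq
    simp only [] at hpq
    have h1 : p.1 ∈ ({q.1, q.2} : Finset (Fin n)) := by rw [← hpq]; simp
    have h2 : p.2 ∈ ({q.1, q.2} : Finset (Fin n)) := by rw [← hpq]; simp
    have h3 : q.1 ∈ ({p.1, p.2} : Finset (Fin n)) := by rw [hpq]; simp
    simp only [Finset.mem_insert, Finset.mem_singleton, Fin.ext_iff] at h1 h2 h3
    have hp2 : p.1.val < p.2.val := hp.2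
    have hq2 : q.1.val < q.2.val := hq.2
    rw [Prod.ext_iff, Fin.ext_iff, Fin.ext_iff]
    omega

set_option maxHeartbeats 2000000 in
theorem statement5 {n : ℕ} (f : MvPolynomial (Fin n) ℝ) (a : Fin n → Fin n → ℝ)
    (hconst : ∀ i j, pderiv i (pderiv j f) = C (a i j))
    (hsymm : ∀ i j, a i j = a j i) :
    (∀ i j h k : Fin n,
      ⁅Lder f i j, Lder f h k⁆ =
        a j h • Lder f i k - a i h • Lder f j k
          - a j k • Lder f i h + a i k • Lder f j h) ∧
    (∀ D D' : Derivation ℝ (MvPolynomial (Fin n) ℝ) (MvPolynomial (Fin n) ℝ),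
      D ∈ Submodule.span ℝ (Set.range fun p : Fin n × Fin n => Lder f p.1 p.2) →
      D' ∈ Submodule.span ℝ (Set.range fun p : Fin n × Fin n => Lder f p.1 p.2) →
      ⁅D, D'⁆ ∈ Submodule.span ℝ (Set.range fun p : Fin n × Fin n => Lder f p.1 p.2)) ∧
    Module.finrank ℝ
      (Submodule.span ℝ (Set.range fun p : Fin n × Fin n => Lder f p.1 p.2))
      ≤ n * (n - 1) / 2 := by
  classical
  set S := Set.range fun p : Fin n × Fin n => Lder f p.1 p.2 with hS
  have hgen : ∀ i j : Fin n, Lder f i j ∈ Submodule.span ℝ S := fun i j =>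
    Submodule.subset_span ⟨(i, j), rfl⟩
  refine ⟨Lder_bracket f a hconst hsymm, ?_, ?_⟩
  · intro D D' hD hD'
    induction hD, hD' using Submodule.span_induction₂ with
    | mem_mem x y hx hy =>
        obtain ⟨p, rfl⟩ := hx
        obtain ⟨q, rfl⟩ := hy
        rw [Lder_bracket f a hconst hsymm]
        exact add_mem (sub_mem (sub_mem (Submodule.smul_mem _ _ (hgen _ _))
          (Submodule.smul_mem _ _ (hgen _ _))) (Submodule.smul_mem _ _ (hgen _ _)))
          (Submodule.smul_mem _ _ (hgen _ _))
    | zero_left y hy => rw [Dzero_lie]; exact (Submodule.span ℝ S).zero_mem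
    | zero_right x hx => rw [Dlie_zero]; exact (Submodule.span ℝ S).zero_mem
    | add_left x y z hx hy hz h1 h2 => rw [Dadd_lie]; exact add_mem h1 h2
    | add_right x y z hx hy hz h1 h2 => rw [Dlie_add]; exact add_mem h1 h2
    | smul_left r x y hx hy h1 => rw [Dsmul_lie]; exact Submodule.smul_mem _ _ h1
    | smul_right r x y hx hy h1 => rw [Dlie_smul]; exact Submodule.smul_mem _ _ h1
  · set t : Finset (Derivation ℝ (MvPolynomial (Fin n) ℝ) (MvPolynomial (Fin n) ℝ)) :=
      (Finset.univ.filter (fun p : Fin n × Fin n => p.1 < p.2)).image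
        (fun p => Lder f p.1 p.2) with ht
    have hspan : Submodule.span ℝ S = Submodule.span ℝ (t : Set _) := by
      apply le_antisymm
      · rw [Submodule.span_le]
        rintro _ ⟨p, rfl⟩
        show Lder f p.1 p.2 ∈ Submodule.span ℝ (t : Set _)
        rcases lt_trichotomy p.1 p.2 with hlt | heq | hgt
        · exact Submodule.subset_span (Finset.mem_coe.mpr (Finset.mem_image.mpr
            ⟨p, Finset.mem_filter.mpr ⟨Finset.mem_univ _, hlt⟩, rfl⟩))
        · rw [heq, Lder_self]
          exact Submodule.zero_mem _
        · rw [Lder_swap]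
          exact neg_mem (Submodule.subset_span (Finset.mem_coe.mpr (Finset.mem_image.mpr
            ⟨(p.2, p.1), Finset.mem_filter.mpr ⟨Finset.mem_univ _, hgt⟩, rfl⟩)))
      · apply Submodule.span_mono
        intro x hx
        obtain ⟨p, -, rfl⟩ := Finset.mem_image.mp (Finset.mem_coe.mp hx)
        exact ⟨p, rfl⟩
    rw [hspan]
    exact le_trans (finrank_span_finset_le_card t)
      (le_trans Finset.card_image_le (card_filter_lt_le n))
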